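/- The 𝒯-module M_t(λ, α) is simple if and only if α ≠ 0. Moreover, when α = 0, the subspace Υ_t = ∂²·ℂ[∂²] ⊕ ∂·ℂ[∂²] is the unique proper nonzero submodule of M_t(λ, 0), and the quotient M_t(λ, 0)/Υ_t is a one-dimensional trivial 𝒯-module. -/
import Mathlib


open Polynomial

/- The module `M_t(λ, α) = ℂ[∂²] ⊕ ∂ℂ[∂²]` is encoded as pairs `(f, g)` of
polynomials (in the variable `∂²`), `(f, g) ↔ f(∂²) + ∂ g(∂²)`.  Half-integer
indices `p ∈ (1/2)ℤ`, `r ∈ 1/2 + ℤ` are encoded by their doubles `a = 2p` (with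
`a` odd for `r`); `λ = ν²` for a fixed square root `ν`, so `λ^p = ν^a`. -/

/-- The action of `L_m` on `M_t(λ,α)`. -/
noncomputable def MLop (nu α : ℂ) (m : ℤ) (v : Polynomial ℂ × Polynomial ℂ) :
    Polynomial ℂ × Polynomial ℂ :=
  (nu ^ (2 * m) • ((X + C ((m : ℂ) * α)) * v.1.comp (X + C (m : ℂ))),
   nu ^ (2 * m) • ((X + C ((m : ℂ) * (α + 1/2))) * v.2.comp (X + C (m : ℂ))))

/-- The action of `I_r` (`r = a/2`, `a` odd) on `M_t(λ,α)`. -/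
noncomputable def MIop (t nu α : ℂ) (a : ℤ) (v : Polynomial ℂ × Polynomial ℂ) :
    Polynomial ℂ × Polynomial ℂ :=
  ((-2 * t ^ a * nu ^ a * α) • v.1.comp (X + C ((a : ℂ) / 2)),
   (t ^ a * nu ^ a * (1 - 2 * α)) • v.2.comp (X + C ((a : ℂ) / 2)))

/-- The action of `G_p` (`p = a/2`) on `M_t(λ,α)`. -/
noncomputable def MGop (t nu α : ℂ) (a : ℤ) (v : Polynomial ℂ × Polynomial ℂ) :
    Polynomial ℂ × Polynomial ℂ :=
  (((-t) ^ a * nu ^ a) • ((X + C ((a : ℂ) * α)) * v.2.comp (X + C ((a : ℂ) / 2))),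
   (t ^ a * nu ^ a) • v.1.comp (X + C ((a : ℂ) / 2)))

/-- A (graded) 𝒯-submodule of `M_t(λ,α)`. -/
def IsTSub (t nu α : ℂ) (N : Submodule ℂ (Polynomial ℂ × Polynomial ℂ)) : Prop :=
  (∀ v ∈ N, ((v.1, 0) : Polynomial ℂ × Polynomial ℂ) ∈ N) ∧
  (∀ m : ℤ, ∀ v ∈ N, MLop nu α m v ∈ N) ∧
  (∀ a : ℤ, Odd a → ∀ v ∈ N, MIop t nu α a v ∈ N) ∧
  (∀ a : ℤ, ∀ v ∈ N, MGop t nu α a v ∈ N)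

/-- `Υ_t = ∂²ℂ[∂²] ⊕ ∂ℂ[∂²]`: pairs whose first component has zero constant term. -/
noncomputable def Upsilon : Submodule ℂ (Polynomial ℂ × Polynomial ℂ) :=
  (LinearMap.ker (lcoeff ℂ 0)).prod ⊤

lemma natDegree_eq_zero_of_comp_shift (f : Polynomial ℂ) (s : ℂ) (hs : s ≠ 0)
    (h : f.comp (X + C s) = f) : f.natDegree = 0 := by
  have key : ∀ n : ℕ, f.eval ((n : ℂ) * s) = f.eval 0 := by
    intro n
    induction n with
    | zero => simp
    | succ n ih =>
      have h2 := congrArg (fun p => Polynomial.eval ((n : ℂ) * s) p) h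
      simp only [eval_comp, eval_add, eval_X, eval_C] at h2
      calc f.eval (((n : ℕ) + 1 : ℕ) * s) = f.eval ((n : ℂ) * s + s) := by push_cast; ring_nf
      _ = f.eval ((n : ℂ) * s) := h2
      _ = f.eval 0 := ih
  have hroot : f - C (f.eval 0) = 0 := by
    apply Polynomial.eq_zero_of_infinite_isRoot
    apply Set.infinite_of_injective_forall_mem (f := fun n : ℕ => (n : ℂ) * s)
    · intro a b hab
      have : (a : ℂ) = b := mul_right_cancel₀ hs hab
      exact_mod_cast this
    · intro n
      simp [IsRoot, key n]
  have : f = C (f.eval 0) := sub_eq_zero.mp hroot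
  rw [this]; exact natDegree_C _


lemma exists_const_mem (J : Submodule ℂ (Polynomial ℂ))
    (hs : ∀ f ∈ J, f.comp (X + C ((1:ℂ)/2)) ∈ J) :
    ∀ f ∈ J, f ≠ 0 → ∃ c : ℂ, c ≠ 0 ∧ C c ∈ J := by
  suffices H : ∀ n : ℕ, ∀ f ∈ J, f ≠ 0 → f.natDegree ≤ n → ∃ c : ℂ, c ≠ 0 ∧ C c ∈ J by
    exact fun f hf h0 => H f.natDegree f hf h0 le_rfl
  intro n
  induction n with
  | zero =>
    intro f hf h0 hd
    refine ⟨f.coeff 0, fun hc => h0 ?_, ?_⟩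
    · rw [eq_C_of_natDegree_le_zero hd, hc, map_zero]
    · rw [← eq_C_of_natDegree_le_zero hd]; exact hf
  | succ n ih =>
    intro f hf h0 hd
    by_cases hdeg : f.natDegree = 0
    · refine ⟨f.coeff 0, fun hc => h0 ?_, ?_⟩
      · rw [eq_C_of_natDegree_le_zero hdeg.le, hc, map_zero]
      · rw [← eq_C_of_natDegree_le_zero hdeg.le]; exact hf
    · set g := f.comp (X + C ((1:ℂ)/2)) - f with hg
      have hgJ : g ∈ J := J.sub_mem (hs f hf) hf
      have hcompne : f.comp (X + C ((1:ℂ)/2)) ≠ f := fun hcon =>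
        hdeg (natDegree_eq_zero_of_comp_shift f _ (by norm_num) hcon)
      have hg0 : g ≠ 0 := sub_ne_zero.mpr hcompne
      have hndcomp : (f.comp (X + C ((1:ℂ)/2))).natDegree = f.natDegree := by
        rw [natDegree_comp, natDegree_X_add_C, mul_one]
      have hcomp0 : f.comp (X + C ((1:ℂ)/2)) ≠ 0 := by
        intro hc
        rw [hc, natDegree_zero] at hndcomp
        exact hdeg hndcomp.symm
      have hdegeq : (f.comp (X + C ((1:ℂ)/2))).degree = f.degree := by
        rw [degree_eq_natDegree hcomp0, degree_eq_natDegree h0, hndcomp]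
      have hlc : (f.comp (X + C ((1:ℂ)/2))).leadingCoeff = f.leadingCoeff := by
        rw [leadingCoeff_comp (by rw [natDegree_X_add_C]; norm_num),
          leadingCoeff_X_add_C, one_pow, mul_one]
      have hdlt : g.degree < f.degree := hdegeq ▸ degree_sub_lt hdegeq hcomp0 hlc
      have : g.natDegree < f.natDegree := natDegree_lt_natDegree hg0 hdlt
      exact ih g hgJ hg0 (by omega)


lemma MLop_zero (nu α : ℂ) (v : Polynomial ℂ × Polynomial ℂ) :
    MLop nu α 0 v = (X * v.1, X * v.2) := by
  simp [MLop]

lemma MGop_zero (t nu α : ℂ) (v : Polynomial ℂ × Polynomial ℂ) :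
    MGop t nu α 0 v = (X * v.2, v.1) := by
  simp [MGop]

lemma MIop_one (t nu α : ℂ) (v : Polynomial ℂ × Polynomial ℂ) :
    MIop t nu α 1 v = ((-2 * t * nu * α) • v.1.comp (X + C ((1:ℂ)/2)),
      (t * nu * (1 - 2 * α)) • v.2.comp (X + C ((1:ℂ)/2))) := by
  simp [MIop]

lemma MGop_one (t nu α : ℂ) (v : Polynomial ℂ × Polynomial ℂ) :
    MGop t nu α 1 v = ((-t * nu) • ((X + C α) * v.2.comp (X + C ((1:ℂ)/2))),
      (t * nu) • v.1.comp (X + C ((1:ℂ)/2))) := by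
  simp [MGop]


lemma mem_Upsilon (v : Polynomial ℂ × Polynomial ℂ) : v ∈ Upsilon ↔ v.1.coeff 0 = 0 := by
  simp [Upsilon, Submodule.mem_prod, LinearMap.mem_ker, lcoeff_apply]

lemma mem_snd {N : Submodule ℂ (Polynomial ℂ × Polynomial ℂ)}
    (h1 : ∀ v ∈ N, ((v.1, 0) : Polynomial ℂ × Polynomial ℂ) ∈ N)
    {v} (hv : v ∈ N) : ((0, v.2) : Polynomial ℂ × Polynomial ℂ) ∈ N := by
  have h := N.sub_mem hv (h1 v hv)
  have : v - ((v.1, 0) : Polynomial ℂ × Polynomial ℂ) = (0, v.2) := by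
    ext <;> simp
  rwa [this] at h

lemma smul_pair (c : ℂ) (p q : Polynomial ℂ) :
    c • ((p, q) : Polynomial ℂ × Polynomial ℂ) = (c • p, c • q) := rfl

/-- From a nonzero module, extract a nonzero element of the even part. -/
lemma getf (t nu α : ℂ) (N : Submodule ℂ (Polynomial ℂ × Polynomial ℂ))
    (hN : IsTSub t nu α N) (hbot : N ≠ ⊥) :
    ∃ f : Polynomial ℂ, f ≠ 0 ∧ ((f, 0) : Polynomial ℂ × Polynomial ℂ) ∈ N := by
  obtain ⟨v, hv, hv0⟩ := (Submodule.ne_bot_iff N).mp hbot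
  by_cases h1 : v.1 = 0
  · have h2 : v.2 ≠ 0 := fun hc => hv0 (Prod.ext h1 hc)
    have hG := hN.2.2.2 0 v hv
    rw [MGop_zero] at hG
    have := hN.1 _ hG
    simp only at this
    exact ⟨X * v.2, mul_ne_zero X_ne_zero h2, this⟩
  · exact ⟨v.1, h1, hN.1 v hv⟩

/-- If `(1,0) ∈ N` then `N = ⊤` (using only `L`, `G` closure and grading). -/
lemma top_of_one_mem (t nu α : ℂ) (N : Submodule ℂ (Polynomial ℂ × Polynomial ℂ))
    (hN : IsTSub t nu α N)
    (h1 : ((1, 0) : Polynomial ℂ × Polynomial ℂ) ∈ N) : N = ⊤ := by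
  have h01 : ((0, 1) : Polynomial ℂ × Polynomial ℂ) ∈ N := by
    have := hN.2.2.2 0 _ h1
    rw [MGop_zero] at this
    simpa using this
  have hpow : ∀ n : ℕ, ((X ^ n, 0) : Polynomial ℂ × Polynomial ℂ) ∈ N ∧
      ((0, X ^ n) : Polynomial ℂ × Polynomial ℂ) ∈ N := by
    intro n
    induction n with
    | zero => simpa using ⟨h1, h01⟩
    | succ n ih =>
      constructor
      · have := hN.2.1 0 _ ih.1
        rw [MLop_zero] at this
        simpa [pow_succ, mul_comm] using this
      · have := hN.2.1 0 _ ih.2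
        rw [MLop_zero] at this
        simpa [pow_succ, mul_comm] using this
  have hfst : ∀ f : Polynomial ℂ, ((f, 0) : Polynomial ℂ × Polynomial ℂ) ∈ N := by
    intro f
    induction f using Polynomial.induction_on' with
    | add p q hp hq =>
      have := N.add_mem hp hq
      simpa using this
    | monomial n a =>
      have := N.smul_mem a (hpow n).1
      rw [smul_pair, smul_zero, smul_X_eq_monomial] at this
      exact this
  have hsnd : ∀ g : Polynomial ℂ, ((0, g) : Polynomial ℂ × Polynomial ℂ) ∈ N := by
    intro g
    induction g using Polynomial.induction_on' with
    | add p q hp hq =>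
      have := N.add_mem hp hq
      simpa using this
    | monomial n a =>
      have := N.smul_mem a (hpow n).2
      rw [smul_pair, smul_zero, smul_X_eq_monomial] at this
      exact this
  rw [Submodule.eq_top_iff']
  intro v
  have := N.add_mem (hfst v.1) (hsnd v.2)
  simpa using this

lemma simple_of_ne (t nu α : ℂ) (ht : t ≠ 0) (hnu : nu ≠ 0) (hα : α ≠ 0)
    (N : Submodule ℂ (Polynomial ℂ × Polynomial ℂ)) (hN : IsTSub t nu α N)
    (hbot : N ≠ ⊥) : N = ⊤ := by
  obtain ⟨f, hf0, hfN⟩ := getf t nu α N hN hbot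
  set J : Submodule ℂ (Polynomial ℂ) := N.comap (LinearMap.inl ℂ _ _) with hJ
  have hmemJ : ∀ p : Polynomial ℂ, p ∈ J ↔ ((p, 0) : Polynomial ℂ × Polynomial ℂ) ∈ N := by
    intro p; simp [hJ, Submodule.mem_comap]
  have hshift : ∀ p ∈ J, p.comp (X + C ((1:ℂ)/2)) ∈ J := by
    intro p hp
    have hI := hN.2.2.1 1 odd_one _ ((hmemJ p).mp hp)
    rw [MIop_one] at hI
    simp only [zero_comp, smul_zero] at hI
    have hc : (-2 * t * nu * α) ≠ 0 := by
      simp [ht, hnu, hα]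
    rw [hmemJ]
    refine (N.smul_mem_iff hc).mp ?_
    rw [smul_pair, smul_zero]; exact hI
  obtain ⟨c, hc0, hcJ⟩ := exists_const_mem J hshift f ((hmemJ f).mpr hfN) hf0
  have h1 : ((1, 0) : Polynomial ℂ × Polynomial ℂ) ∈ N := by
    have := N.smul_mem c⁻¹ ((hmemJ _).mp hcJ)
    rw [smul_pair, smul_zero, Polynomial.smul_C, smul_eq_mul, inv_mul_cancel₀ hc0, map_one] at this
    exact this
  exact top_of_one_mem t nu α N hN h1

lemma classify_zero (t nu : ℂ) (ht : t ≠ 0) (hnu : nu ≠ 0)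
    (N : Submodule ℂ (Polynomial ℂ × Polynomial ℂ)) (hN : IsTSub t nu 0 N)
    (hbot : N ≠ ⊥) (htop : N ≠ ⊤) : N = Upsilon := by
  obtain ⟨f, hf0, hfN⟩ := getf t nu 0 N hN hbot
  -- J := second-component submodule
  set J : Submodule ℂ (Polynomial ℂ) := N.comap (LinearMap.inr ℂ _ _) with hJ
  have hmemJ : ∀ p : Polynomial ℂ, p ∈ J ↔ ((0, p) : Polynomial ℂ × Polynomial ℂ) ∈ N := by
    intro p; simp [hJ, Submodule.mem_comap]
  have hshift : ∀ p ∈ J, p.comp (X + C ((1:ℂ)/2)) ∈ J := by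
    intro p hp
    have hI := hN.2.2.1 1 odd_one _ ((hmemJ p).mp hp)
    rw [MIop_one] at hI
    simp only [zero_comp, smul_zero, mul_zero, zero_smul, mul_one, sub_zero] at hI
    have hc : t * nu ≠ 0 := mul_ne_zero ht hnu
    rw [hmemJ]
    exact (N.smul_mem_iff hc).mp (by rw [smul_pair, smul_zero]; exact hI)
  -- f.comp (X + 1/2) ∈ J and is nonzero
  have hfJ : f.comp (X + C ((1:ℂ)/2)) ∈ J := by
    have hG := hN.2.2.2 1 _ hfN
    rw [MGop_one] at hG
    simp only [zero_comp, mul_zero, smul_zero] at hG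
    have hc : t * nu ≠ 0 := mul_ne_zero ht hnu
    rw [hmemJ]
    exact (N.smul_mem_iff hc).mp (by rw [smul_pair, smul_zero]; exact hG)
  have hfc0 : f.comp (X + C ((1:ℂ)/2)) ≠ 0 := by
    intro hcomp
    rcases Polynomial.comp_eq_zero_iff.mp hcomp with h | ⟨-, h⟩
    · exact hf0 h
    · have := congrArg Polynomial.natDegree h
      rw [natDegree_X_add_C, natDegree_C] at this
      exact one_ne_zero this
  obtain ⟨c, hc0, hcJ⟩ := exists_const_mem J hshift _ hfJ hfc0
  have h01 : ((0, 1) : Polynomial ℂ × Polynomial ℂ) ∈ N := by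
    have := N.smul_mem c⁻¹ ((hmemJ _).mp hcJ)
    rw [smul_pair, smul_zero, Polynomial.smul_C, smul_eq_mul, inv_mul_cancel₀ hc0, map_one] at this
    exact this
  -- all (0, g) ∈ N
  have hpow : ∀ n : ℕ, ((0, X ^ n) : Polynomial ℂ × Polynomial ℂ) ∈ N := by
    intro n
    induction n with
    | zero => simpa using h01
    | succ n ih =>
      have := hN.2.1 0 _ ih
      rw [MLop_zero] at this
      simpa [pow_succ, mul_comm] using this
  have hsnd : ∀ g : Polynomial ℂ, ((0, g) : Polynomial ℂ × Polynomial ℂ) ∈ N := by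
    intro g
    induction g using Polynomial.induction_on' with
    | add p q hp hq => simpa using N.add_mem hp hq
    | monomial n a =>
      have := N.smul_mem a (hpow n)
      rwa [smul_pair, smul_zero, smul_X_eq_monomial] at this
  -- all (X * g, 0) ∈ N
  have hXg : ∀ g : Polynomial ℂ, ((X * g, 0) : Polynomial ℂ × Polynomial ℂ) ∈ N := by
    intro g
    have := hN.2.2.2 0 _ (hsnd g)
    rw [MGop_zero] at this
    simpa using this
  -- Upsilon ≤ N
  have hUN : Upsilon ≤ N := by
    intro v hv
    rw [mem_Upsilon] at hv
    have hv1 : v.1 = X * v.1.divX := by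
      conv_lhs => rw [← Polynomial.X_mul_divX_add v.1]
      rw [hv, map_zero, add_zero]
    have m1 : ((v.1, 0) : Polynomial ℂ × Polynomial ℂ) ∈ N := by
      rw [hv1]; exact hXg _
    have := N.add_mem m1 (hsnd v.2)
    simpa using this
  -- N ≤ Upsilon
  have hNU : N ≤ Upsilon := by
    intro v hv
    rw [mem_Upsilon]
    by_contra hb
    have hm1 : ((v.1, 0) : Polynomial ℂ × Polynomial ℂ) ∈ N := hN.1 v hv
    have hm2 : ((v.1 - C (v.1.coeff 0), 0) : Polynomial ℂ × Polynomial ℂ) ∈ N := by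
      apply hUN
      rw [mem_Upsilon]
      simp
    have hm3 : ((C (v.1.coeff 0), 0) : Polynomial ℂ × Polynomial ℂ) ∈ N := by
      have := N.sub_mem hm1 hm2
      simpa using this
    have h1 : ((1, 0) : Polynomial ℂ × Polynomial ℂ) ∈ N := by
      have := N.smul_mem (v.1.coeff 0)⁻¹ hm3
      rwa [smul_pair, smul_zero, Polynomial.smul_C, smul_eq_mul, inv_mul_cancel₀ hb,
        map_one] at this
    exact htop (top_of_one_mem t nu 0 N hN h1)
  exact le_antisymm hNU hUN

lemma MLop_mem_Upsilon (nu : ℂ) (m : ℤ) (v : Polynomial ℂ × Polynomial ℂ) :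
    MLop nu 0 m v ∈ Upsilon := by
  rw [mem_Upsilon]
  simp [MLop, coeff_smul, Polynomial.mul_coeff_zero]

lemma MIop_mem_Upsilon (t nu : ℂ) (a : ℤ) (v : Polynomial ℂ × Polynomial ℂ) :
    MIop t nu 0 a v ∈ Upsilon := by
  rw [mem_Upsilon]
  simp [MIop]

lemma MGop_mem_Upsilon (t nu : ℂ) (a : ℤ) (v : Polynomial ℂ × Polynomial ℂ) :
    MGop t nu 0 a v ∈ Upsilon := by
  rw [mem_Upsilon]
  simp [MGop, coeff_smul, Polynomial.mul_coeff_zero]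

lemma isTSub_Upsilon (t nu : ℂ) : IsTSub t nu 0 Upsilon := by
  refine ⟨?_, fun m v _ => MLop_mem_Upsilon nu m v,
    fun a _ v _ => MIop_mem_Upsilon t nu a v,
    fun a v _ => MGop_mem_Upsilon t nu a v⟩
  intro v hv
  rw [mem_Upsilon] at hv ⊢
  exact hv

lemma Upsilon_ne_bot : Upsilon ≠ ⊥ := by
  rw [Submodule.ne_bot_iff]
  refine ⟨(X, 0), ?_, ?_⟩
  · rw [mem_Upsilon]; simp
  · simp [Prod.ext_iff, X_ne_zero]

lemma Upsilon_ne_top : Upsilon ≠ ⊤ := by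
  intro h
  have : ((1, 0) : Polynomial ℂ × Polynomial ℂ) ∈ Upsilon := by rw [h]; trivial
  rw [mem_Upsilon] at this
  simp at this

lemma finrank_quot : Module.finrank ℂ ((Polynomial ℂ × Polynomial ℂ) ⧸ Upsilon) = 1 := by
  set φ : (Polynomial ℂ × Polynomial ℂ) →ₗ[ℂ] ℂ :=
    (lcoeff ℂ 0).comp (LinearMap.fst ℂ _ _) with hφ
  have hker : LinearMap.ker φ = Upsilon := by
    ext v
    rw [LinearMap.mem_ker, mem_Upsilon]
    simp [hφ]
  have hsurj : Function.Surjective φ := by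
    intro c
    exact ⟨(C c, 0), by simp [hφ]⟩
  have e := LinearMap.quotKerEquivOfSurjective φ hsurj
  rw [hker] at e
  rw [e.finrank_eq, Module.finrank_self]


/-- `M_t(λ,α)` is simple iff `α ≠ 0`; for `α = 0`, `Υ_t` is the unique proper nonzero
submodule, and the quotient is a one-dimensional trivial 𝒯-module. -/
theorem stmt9 (t nu : ℂ) (ht : t = 1 ∨ t = -1) (hnu : nu ≠ 0) :
    (∀ α : ℂ,
      ((∀ N : Submodule ℂ (Polynomial ℂ × Polynomial ℂ),
          IsTSub t nu α N → N = ⊥ ∨ N = ⊤) ↔ α ≠ 0)) ∧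
    IsTSub t nu 0 Upsilon ∧ Upsilon ≠ ⊥ ∧ Upsilon ≠ ⊤ ∧
    (∀ N : Submodule ℂ (Polynomial ℂ × Polynomial ℂ),
        IsTSub t nu 0 N → N ≠ ⊥ → N ≠ ⊤ → N = Upsilon) ∧
    Module.finrank ℂ ((Polynomial ℂ × Polynomial ℂ) ⧸ Upsilon) = 1 ∧
    (∀ (m : ℤ) (v : Polynomial ℂ × Polynomial ℂ), MLop nu 0 m v ∈ Upsilon) ∧
    (∀ a : ℤ, Odd a → ∀ v : Polynomial ℂ × Polynomial ℂ, MIop t nu 0 a v ∈ Upsilon) ∧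
    (∀ (a : ℤ) (v : Polynomial ℂ × Polynomial ℂ), MGop t nu 0 a v ∈ Upsilon) := by
  have ht0 : t ≠ 0 := by rcases ht with h | h <;> rw [h] <;> norm_num
  refine ⟨?_, isTSub_Upsilon t nu, Upsilon_ne_bot, Upsilon_ne_top,
    fun N hN hb htp => classify_zero t nu ht0 hnu N hN hb htp, finrank_quot,
    fun m v => MLop_mem_Upsilon nu m v, fun a _ v => MIop_mem_Upsilon t nu a v,
    fun a v => MGop_mem_Upsilon t nu a v⟩
  intro α
  constructor
  · intro hsimp hα0
    rw [hα0] at hsimp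
    rcases hsimp Upsilon (isTSub_Upsilon t nu) with h | h
    · exact Upsilon_ne_bot h
    · exact Upsilon_ne_top h
  · intro hα N hN
    by_cases hb : N = ⊥
    · exact Or.inl hb
    · exact Or.inr (simple_of_ne t nu α ht0 hnu hα N hN hb)
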